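/- The space X[λ, μ, 𝒜, C̄] is zero-dimensional: each basic open set U((α,φ),η) and each set ⋃{X_γ : β < γ ≤ α} is clopen, so X has a base of clopen sets. -/

import Mathlib

open Set Ordinal Cardinal Topology

noncomputable section

namespace DSoukupPaper

/-- The set `S^λ_μ` of ordinals below `lam` of cofinality `mu`. -/
def Sset (lam : Ordinal.{0}) (mu : Cardinal.{0}) : Set Ordinal := {α | α < lam ∧ α.cof = mu}

/-- `C` is a club in the ordinal `o`. -/
def IsClubBelow (C : Set Ordinal.{0}) (o : Ordinal.{0}) : Prop :=
  C ⊆ Set.Iio o ∧ (∀ β < o, ∃ γ ∈ C, β ≤ γ) ∧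
    (∀ β < o, Order.IsSuccLimit β → (∀ γ < β, ∃ δ ∈ C, γ < δ ∧ δ < β) → β ∈ C)

/-- `A` is nonstationary in the ordinal `o`. -/
def IsNonstationaryBelow (A : Set Ordinal.{0}) (o : Ordinal.{0}) : Prop :=
  ∃ C : Set Ordinal, IsClubBelow C o ∧ ∀ x ∈ A, x ∉ C

/-- `A` is stationary in the ordinal `o`. -/
def IsStationaryBelow (A : Set Ordinal.{0}) (o : Ordinal.{0}) : Prop :=
  ∀ C : Set Ordinal, IsClubBelow C o → ∃ x ∈ A, x ∈ C

/-- A `T₁` space is linearly D iff every nontrivial monotone open cover admits a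
closed discrete big set (Guo–Junnila characterization, taken as definition). -/
def LinearlyDSpace (Y : Type*) [TopologicalSpace Y] : Prop :=
  ∀ 𝒰 : Set (Set Y), (∀ U ∈ 𝒰, IsOpen U) → ⋃₀ 𝒰 = Set.univ →
    IsChain (· ⊆ ·) 𝒰 → (∀ U ∈ 𝒰, U ≠ Set.univ) →
    ∃ D : Set Y, IsClosed D ∧ DiscreteTopology D ∧ ∀ U ∈ 𝒰, ¬D ⊆ U

/-- The data of the construction `X[λ,μ,𝒜,C̄]`: cardinals `λ > μ = cf(μ)`,
a MAD family `𝒜 = {M^φ : φ < κ} ⊆ [μ]^μ`, and an `S^λ_μ`-club sequence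
`C̄ = ⟨C_α : α ∈ S^λ_μ⟩`, given via increasing enumerations `a α : μ → C_α`. -/
structure Setup where
  lam : Cardinal.{0}
  mu : Cardinal.{0}
  kappa : Cardinal.{0}
  mu_reg : mu.IsRegular
  mu_lt_lam : mu < lam
  /-- the MAD family: `M φ` for `φ < κ` -/
  M : Ordinal.{0} → Set Ordinal.{0}
  M_sub : ∀ φ < kappa.ord, M φ ⊆ Set.Iio mu.ord
  M_card : ∀ φ < kappa.ord, #(M φ) = Cardinal.lift.{1} mu
  M_ad : ∀ φ < kappa.ord, ∀ ψ < kappa.ord, φ ≠ ψ →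
    #(↥(M φ ∩ M ψ)) < Cardinal.lift.{1} mu
  M_mad : ∀ N ⊆ Set.Iio mu.ord, #N = Cardinal.lift.{1} mu →
    ∃ φ < kappa.ord, #(↥(N ∩ M φ)) = Cardinal.lift.{1} mu
  /-- the club sequence: `a α ξ` is the `ξ`-th element of `C_α` -/
  a : Ordinal.{0} → Ordinal.{0} → Ordinal.{0}
  a_mono : ∀ α ∈ Sset lam.ord mu, ∀ ξ < mu.ord, ∀ ζ < ξ, a α ζ < a α ξ
  a_lt : ∀ α ∈ Sset lam.ord mu, ∀ ξ < mu.ord, a α ξ < α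
  a_unbounded : ∀ α ∈ Sset lam.ord mu, ∀ β < α, ∃ ξ < mu.ord, β ≤ a α ξ
  a_closed : ∀ α ∈ Sset lam.ord mu, ∀ ξ < mu.ord, Order.IsSuccLimit ξ →
    IsLUB (a α '' Set.Iio ξ) (a α ξ)

namespace Setup

variable (P : Setup)

/-- `C_α` as a set. -/
def C (α : Ordinal) : Set Ordinal := P.a α '' Set.Iio P.mu.ord

open Classical in
/-- the interval `I^ξ_α`. -/
def I (α ξ : Ordinal) : Set Ordinal :=
  if Order.IsSuccLimit ξ then Set.Icc (P.a α ξ) (P.a α (ξ + 1)) else Set.Ioc (P.a α ξ) (P.a α (ξ + 1))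

/-- the underlying set of the space: a subset of `λ × κ`. -/
def Xset : Set (Ordinal × Ordinal) :=
  {p | p.1 < P.lam.ord ∧
    ((p.1 ∈ Sset P.lam.ord P.mu ∧ p.2 < P.kappa.ord) ∨
      (p.1 ∉ Sset P.lam.ord P.mu ∧ p.2 = 0))}

/-- the column `X_α` (as a set of pairs). -/
def col (α : Ordinal) : Set (Ordinal × Ordinal) := {p ∈ P.Xset | p.1 = α}

/-- basic neighborhood `U((α,φ),η)` for `α ∈ S^λ_μ`. -/
def U1 (α φ η : Ordinal) : Set (Ordinal × Ordinal) :=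
  {(α, φ)} ∪ ⋃ γ ∈ (⋃ ξ ∈ {ξ | ξ ∈ P.M φ ∧ η ≤ ξ}, P.I α ξ), P.col γ

/-- basic neighborhood `U(α,β) = ⋃{X_γ : β < γ ≤ α}`. -/
def U3 (α β : Ordinal) : Set (Ordinal × Ordinal) := ⋃ γ ∈ Set.Ioc β α, P.col γ

/-- the collection of basic open sets. -/
def basics : Set (Set (Ordinal × Ordinal)) :=
  {B | (∃ α ∈ Sset P.lam.ord P.mu, ∃ φ < P.kappa.ord, ∃ η < P.mu.ord, B = P.U1 α φ η) ∨
    (∃ α < P.lam.ord, α.cof < P.mu ∧ B = {(α, 0)}) ∨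
    (∃ α < P.lam.ord, P.mu < α.cof ∧ ∃ β < α, B = P.U3 α β)}

/-- the topology of `X[λ,μ,𝒜,C̄]`, generated by the basic open sets. -/
instance instTopo : TopologicalSpace ↥P.Xset :=
  TopologicalSpace.generateFrom {V | ∃ B ∈ P.basics, V = Subtype.val ⁻¹' B}

/-- the column `X_α` viewed inside the space. -/
def colS (α : Ordinal) : Set ↥P.Xset := {x | (x : Ordinal × Ordinal).1 = α}

/-- the projection `π(F) = {α < λ : F ∩ X_α ≠ ∅}`. -/
def pi (F : Set ↥P.Xset) : Set Ordinal := {α | ∃ x ∈ F, (x : Ordinal × Ordinal).1 = α}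

/-- `F` is unbounded iff `π(F)` is unbounded in `λ`. -/
def Unbounded (F : Set ↥P.Xset) : Prop := ∀ β < P.lam.ord, ∃ γ ∈ P.pi F, β < γ

/-- `F` is high enough iff `|{α < λ : |F_α| = |F|}| ≥ μ`. -/
def HighEnough (F : Set ↥P.Xset) : Prop :=
  Cardinal.lift.{1} P.mu ≤ #({α | #(↥(F ∩ P.colS α)) = #F} : Set Ordinal)

end Setup
end DSoukupPaper

namespace DSoukupPaper

/-- A subset of ordinals below `o` of cardinality less than the cofinality of `o`
is bounded strictly below `o`. -/
lemma bdd_of_card_lt (o : Ordinal.{0}) (S : Set Ordinal.{0}) (hS : ∀ ξ ∈ S, ξ < o)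
    (hcard : #↥S < Cardinal.lift.{1} o.cof) : ∃ b < o, ∀ ξ ∈ S, ξ < b := by
  by_contra hcon
  push_neg at hcon
  set e := Ordinal.ToType.mk (o := o) with he
  set S₀ : Set o.ToType := {x | (e.symm x : Ordinal) ∈ S} with hS₀
  have hmem : ∀ ξ, ∀ h : ξ ∈ S, e ⟨ξ, hS ξ h⟩ ∈ S₀ := by
    intro ξ h
    simp only [hS₀, Set.mem_setOf_eq, OrderIso.symm_apply_apply]
    exact h
  have hequiv : Nonempty (↥S₀ ≃ ↥S) := by
    refine ⟨{ toFun := fun x => ⟨(e.symm x.1 : Ordinal), x.2⟩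
              invFun := fun y => ⟨e ⟨y.1, hS _ y.2⟩, hmem _ y.2⟩
              left_inv := ?_, right_inv := ?_ }⟩
    · intro x
      apply Subtype.ext
      exact e.apply_symm_apply x.1
    · intro y
      apply Subtype.ext
      simp
  have hc0 : #↥S₀ < o.cof := by
    have h1 : Cardinal.lift.{1} #↥S₀ = Cardinal.lift.{0} #↥S := Cardinal.lift_mk_eq'.2 hequiv
    rw [Cardinal.lift_id'] at h1
    rw [← Cardinal.lift_lt.{_, 1}, h1]
    exact hcard
  set f : ↥S₀ → Ordinal.{0} := fun x => (e.symm x.1 : Ordinal) with hf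
  have hfo : ∀ i, f i < o := fun i => (e.symm i.1).2
  have hlt := Ordinal.lsub_lt_ord hc0 hfo
  obtain ⟨ξ, hξS, hle⟩ := hcon _ hlt
  have hlt2 : ξ < Ordinal.lsub f := by
    have h2 := Ordinal.lt_lsub f ⟨e ⟨ξ, hS _ hξS⟩, hmem _ hξS⟩
    simpa [hf] using h2
  exact absurd (hle.trans_lt hlt2) (lt_irrefl _)

namespace Setup

variable (P : Setup)

lemma muOrd_limit : Order.IsSuccLimit P.mu.ord := Cardinal.isSuccLimit_ord P.mu_reg.aleph0_le

lemma succ_lt_muOrd {ξ : Ordinal} (h : ξ < P.mu.ord) : ξ + 1 < P.mu.ord := by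
  rw [Ordinal.add_one_eq_succ]
  exact P.muOrd_limit.succ_lt h

variable {α φ η : Ordinal}

lemma a_le_a (hα : α ∈ Sset P.lam.ord P.mu) {ζ ξ : Ordinal} (hξ : ξ < P.mu.ord) (h : ζ ≤ ξ) :
    P.a α ζ ≤ P.a α ξ := by
  rcases h.lt_or_eq with h | h
  · exact (P.a_mono α hα ξ hξ ζ h).le
  · rw [h]

lemma mem_I_bounds {γ ξ : Ordinal} (h : γ ∈ P.I α ξ) :
    P.a α ξ ≤ γ ∧ γ ≤ P.a α (ξ + 1) := by
  unfold I at h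
  split_ifs at h with hl
  · exact ⟨h.1, h.2⟩
  · exact ⟨h.1.le, h.2⟩

lemma Ioc_subset_I {ξ : Ordinal} : Set.Ioc (P.a α ξ) (P.a α (ξ + 1)) ⊆ P.I α ξ := by
  unfold I
  split_ifs with hl
  · exact Set.Ioc_subset_Icc_self
  · exact subset_rfl

lemma I_disjoint (hα : α ∈ Sset P.lam.ord P.mu) {ξ ζ γ : Ordinal} (hξ : ξ < P.mu.ord)
    (hζ : ζ < P.mu.ord) (hne : ξ ≠ ζ) (h1 : γ ∈ P.I α ξ) (h2 : γ ∈ P.I α ζ) : False := by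
  wlog hlt : ξ < ζ generalizing ξ ζ
  · exact this hζ hξ hne.symm h2 h1 (hne.lt_or_gt.resolve_left hlt)
  obtain ⟨hb1, hb2⟩ := P.mem_I_bounds h1
  obtain ⟨hb3, hb4⟩ := P.mem_I_bounds h2
  have hs : ξ + 1 ≤ ζ := by
    rw [Ordinal.add_one_eq_succ]
    exact Order.succ_le_of_lt hlt
  rcases hs.lt_or_eq with h9 | h9
  · exact absurd (P.a_mono α hα ζ hζ (ξ + 1) h9) (not_lt_of_ge (hb3.trans hb2))
  · -- ζ = ξ + 1 : in particular ζ is not a limit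
    unfold I at h2
    split_ifs at h2 with hl
    · have h7 : ξ < ζ := hlt
      have h8 := hl.succ_lt h7
      rw [← h9, Ordinal.add_one_eq_succ] at h8
      exact absurd h8 (lt_irrefl _)
    · exact absurd (le_antisymm (h9 ▸ hb2 : γ ≤ P.a α ζ) hb3) (ne_of_gt h2.1)

/-- the set of first coordinates covered by the columns of `U1 α φ η`. -/
def Jset (α φ η : Ordinal) : Set Ordinal := ⋃ ξ ∈ {ξ | ξ ∈ P.M φ ∧ η ≤ ξ}, P.I α ξ

lemma mem_Jset {γ : Ordinal} : γ ∈ P.Jset α φ η ↔ ∃ ξ, ξ ∈ P.M φ ∧ η ≤ ξ ∧ γ ∈ P.I α ξ := by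
  simp only [Jset, Set.mem_iUnion, Set.mem_setOf_eq, exists_prop]
  exact ⟨fun ⟨ξ, ⟨h1, h2⟩, h3⟩ => ⟨ξ, h1, h2, h3⟩, fun ⟨ξ, h1, h2, h3⟩ => ⟨ξ, ⟨h1, h2⟩, h3⟩⟩

lemma Jset_bounds (hα : α ∈ Sset P.lam.ord P.mu) (hφ : φ < P.kappa.ord) {η ρ : Ordinal}
    (h : ρ ∈ P.Jset α φ η) : P.a α η ≤ ρ ∧ ρ < α := by
  obtain ⟨ξ, hM, hle, hI⟩ := P.mem_Jset.1 h
  have hξ : ξ < P.mu.ord := P.M_sub φ hφ hM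
  obtain ⟨hb1, hb2⟩ := P.mem_I_bounds hI
  have hξ1 : ξ + 1 < P.mu.ord := P.succ_lt_muOrd hξ
  exact ⟨(P.a_le_a hα hξ hle).trans hb1, hb2.trans_lt (P.a_lt α hα (ξ + 1) hξ1)⟩

lemma colU (K : Set Ordinal) :
    ⋃ γ ∈ K, P.col γ = {p | p ∈ P.Xset ∧ p.1 ∈ K} := by
  ext p
  simp only [Set.mem_iUnion, col, Set.mem_setOf_eq, Set.mem_sep_iff, exists_prop]
  constructor
  · rintro ⟨γ, hγ, hX, rfl⟩
    exact ⟨hX, hγ⟩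
  · rintro ⟨hX, hK⟩
    exact ⟨p.1, hK, hX, rfl⟩

lemma mem_U1 {p : Ordinal × Ordinal} :
    p ∈ P.U1 α φ η ↔ p = (α, φ) ∨ (p ∈ P.Xset ∧ p.1 ∈ P.Jset α φ η) := by
  have h : P.U1 α φ η = {(α, φ)} ∪ {q | q ∈ P.Xset ∧ q.1 ∈ P.Jset α φ η} := by
    unfold U1 Jset
    rw [P.colU]
  rw [h]
  simp [Set.mem_union]

lemma mem_U3 {p : Ordinal × Ordinal} {β : Ordinal} :
    p ∈ P.U3 α β ↔ p ∈ P.Xset ∧ p.1 ∈ Set.Ioc β α := by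
  unfold U3
  rw [P.colU]
  rfl

lemma snd_of_S {p : Ordinal × Ordinal} (hp : p ∈ P.Xset) (h : p.1.cof = P.mu) :
    p.2 < P.kappa.ord := by
  rcases hp.2 with ⟨_, h2⟩ | ⟨h1, _⟩
  · exact h2
  · exact absurd ⟨hp.1, h⟩ h1

lemma snd_of_not_S {p : Ordinal × Ordinal} (hp : p ∈ P.Xset) (h : p.1.cof ≠ P.mu) : p.2 = 0 := by
  rcases hp.2 with ⟨h1, _⟩ | ⟨_, h2⟩
  · exact absurd h1.2 h
  · exact h2

lemma U1_mem_basics (hα : α ∈ Sset P.lam.ord P.mu) (hφ : φ < P.kappa.ord) (hη : η < P.mu.ord) :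
    P.U1 α φ η ∈ P.basics := Or.inl ⟨α, hα, φ, hφ, η, hη, rfl⟩

lemma single_mem_basics {α : Ordinal} (h1 : α < P.lam.ord) (h2 : α.cof < P.mu) :
    ({(α, 0)} : Set (Ordinal × Ordinal)) ∈ P.basics := Or.inr (Or.inl ⟨α, h1, h2, rfl⟩)

lemma U3_mem_basics {α β : Ordinal} (h1 : α < P.lam.ord) (h2 : P.mu < α.cof) (h3 : β < α) :
    P.U3 α β ∈ P.basics := Or.inr (Or.inr ⟨α, h1, h2, β, h3, rfl⟩)

lemma isOpen_basic {B : Set (Ordinal × Ordinal)} (hB : B ∈ P.basics) :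
    IsOpen (Subtype.val ⁻¹' B : Set ↥P.Xset) :=
  TopologicalSpace.isOpen_generateFrom_of_mem ⟨B, hB, rfl⟩

lemma open_of {V : Set ↥P.Xset}
    (h : ∀ x ∈ V, ∃ B ∈ P.basics, ↑x ∈ B ∧ Subtype.val ⁻¹' B ⊆ V) : IsOpen V := by
  rw [isOpen_iff_forall_mem_open]
  intro x hx
  obtain ⟨B, hB, hxB, hsub⟩ := h x hx
  exact ⟨Subtype.val ⁻¹' B, hsub, P.isOpen_basic hB, hxB⟩

lemma closed_of {T : Set (Ordinal × Ordinal)}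
    (h : ∀ x : ↥P.Xset, ↑x ∉ T → ∃ B ∈ P.basics, ↑x ∈ B ∧ ∀ p : ↥P.Xset, ↑p ∈ B → ↑p ∉ T) :
    IsClosed (Subtype.val ⁻¹' T : Set ↥P.Xset) := by
  rw [← isOpen_compl_iff]
  apply P.open_of
  intro x hx
  obtain ⟨B, hB, hxB, hd⟩ := h x hx
  exact ⟨B, hB, hxB, fun p hp => hd p hp⟩

lemma gap (hα : α ∈ Sset P.lam.ord P.mu) (hφ : φ < P.kappa.ord) (hη : η < P.mu.ord)
    {β : Ordinal} (hβJ : β ∉ P.Jset α φ η) (hβα : β ≠ α) (hcf : P.mu ≤ β.cof) :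
    ∃ δ < β, (α ≤ δ ∨ β < α) ∧ ∀ ρ ∈ P.Jset α φ η, ρ ≤ δ ∨ β ≤ ρ := by
  have hβlim : Order.IsSuccLimit β := Ordinal.aleph0_le_cof.1 (P.mu_reg.aleph0_le.trans hcf)
  rcases lt_trichotomy β α with hlt | heq | hgt
  · -- β < α
    have hne : ({ζ | ζ < P.mu.ord ∧ β ≤ P.a α ζ}).Nonempty := by
      obtain ⟨ξ, hξ, hle⟩ := P.a_unbounded α hα β hlt
      exact ⟨ξ, hξ, hle⟩
    obtain ⟨ζ₀, hζ₀Z, hmin⟩ := Ordinal.lt_wf.has_min _ hne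
    obtain ⟨hζ₀μ, hζ₀β⟩ := hζ₀Z
    have hbelow : ∀ ζ < ζ₀, P.a α ζ < β := by
      intro ζ hζ
      by_contra hcc
      exact hmin ζ ⟨hζ.trans hζ₀μ, not_lt.1 hcc⟩ hζ
    rcases Ordinal.zero_or_succ_or_isSuccLimit ζ₀ with h0 | ⟨ζ, hsucc⟩ | hlim
    · -- ζ₀ = 0 : β ≤ a α 0
      refine ⟨0, hβlim.pos, Or.inr hlt, fun ρ hρ => Or.inr ?_⟩
      have h1 := (P.Jset_bounds hα hφ hρ).1
      have h2 : P.a α 0 ≤ P.a α η := P.a_le_a hα hη (zero_le : (0 : Ordinal) ≤ η)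
      rw [h0] at hζ₀β
      exact hζ₀β.trans (h2.trans h1)
    · -- ζ₀ = ζ + 1
      have hζζ₀ : ζ < ζ₀ := by rw [← hsucc]; exact Order.lt_succ ζ
      have hζμ : ζ < P.mu.ord := hζζ₀.trans hζ₀μ
      have haζβ : P.a α ζ < β := hbelow ζ hζζ₀
      have hβle : β ≤ P.a α (ζ + 1) := by rw [Ordinal.add_one_eq_succ, hsucc]; exact hζ₀β
      refine ⟨P.a α ζ, haζβ, Or.inr hlt, fun ρ hρ => ?_⟩
      obtain ⟨ξ, hM, hηξ, hI⟩ := P.mem_Jset.1 hρ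
      have hξμ : ξ < P.mu.ord := P.M_sub φ hφ hM
      obtain ⟨hb1, hb2⟩ := P.mem_I_bounds hI
      rcases lt_trichotomy ξ ζ with h1 | h1 | h1
      · left
        have h2 : ξ + 1 ≤ ζ := by rw [Ordinal.add_one_eq_succ]; exact Order.succ_le_of_lt h1
        exact hb2.trans (P.a_le_a hα hζμ h2)
      · exfalso
        subst h1
        exact hβJ (P.mem_Jset.2 ⟨ξ, hM, hηξ, P.Ioc_subset_I ⟨haζβ, hβle⟩⟩)
      · right
        have h2 : ζ + 1 ≤ ξ := by rw [Ordinal.add_one_eq_succ]; exact Order.succ_le_of_lt h1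
        exact hβle.trans ((P.a_le_a hα hξμ h2).trans hb1)
    · -- ζ₀ limit
      exfalso
      have hlub := P.a_closed α hα ζ₀ hζ₀μ hlim
      have hub : β ∈ upperBounds (P.a α '' Set.Iio ζ₀) := by
        rintro y ⟨ζ, hζ, rfl⟩
        exact (hbelow ζ hζ).le
      have hβeq : β = P.a α ζ₀ := le_antisymm hζ₀β (hlub.2 hub)
      have hcard : #↥(P.a α '' Set.Iio ζ₀) < Cardinal.lift.{1} β.cof := by
        calc #↥(P.a α '' Set.Iio ζ₀) ≤ #↥(Set.Iio ζ₀) := Cardinal.mk_image_le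
          _ = Cardinal.lift.{1} ζ₀.card := Ordinal.mk_Iio_ordinal ζ₀
          _ < Cardinal.lift.{1} P.mu := Cardinal.lift_lt.2 (Cardinal.lt_ord.1 hζ₀μ)
          _ ≤ Cardinal.lift.{1} β.cof := Cardinal.lift_le.2 hcf
      obtain ⟨b, hbβ, hb⟩ := bdd_of_card_lt β (P.a α '' Set.Iio ζ₀)
        (by rintro y ⟨ζ, hζ, rfl⟩; exact hbelow ζ hζ) hcard
      have h3 : P.a α ζ₀ ≤ b := hlub.2 (fun y hy => (hb y hy).le)
      rw [← hβeq] at h3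
      exact absurd hbβ (not_lt_of_ge h3)
  · exact absurd heq hβα
  · -- α < β
    exact ⟨α, hgt, Or.inl le_rfl, fun ρ hρ => Or.inl (P.Jset_bounds hα hφ hρ).2.le⟩

lemma nbhd {x : Ordinal × Ordinal} (hx : x ∈ P.Xset) {δ : Ordinal}
    (hδ : δ < x.1 ∨ x.1.cof < P.mu) :
    ∃ B ∈ P.basics, x ∈ B ∧
      ∀ p ∈ B, p = x ∨ (P.mu ≤ x.1.cof ∧ δ < p.1 ∧ p.1 ≤ x.1) := by
  rcases lt_trichotomy x.1.cof P.mu with hc | hc | hc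
  · have h0 : x.2 = 0 := P.snd_of_not_S hx hc.ne
    have hxx : x = (x.1, 0) := Prod.ext_iff.2 ⟨rfl, h0⟩
    refine ⟨{(x.1, 0)}, P.single_mem_basics hx.1 hc, Set.mem_singleton_iff.2 hxx, ?_⟩
    intro p hp
    left
    rw [Set.mem_singleton_iff] at hp
    exact hp.trans hxx.symm
  · have hδ' : δ < x.1 := hδ.resolve_right (by rw [hc]; exact lt_irrefl _)
    have hαS : x.1 ∈ Sset P.lam.ord P.mu := ⟨hx.1, hc⟩
    have hψ : x.2 < P.kappa.ord := P.snd_of_S hx hc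
    obtain ⟨ξ, hξ, hle⟩ := P.a_unbounded x.1 hαS δ hδ'
    have hξ1 : ξ + 1 < P.mu.ord := P.succ_lt_muOrd hξ
    have hξξ1 : ξ < ξ + 1 := by rw [Ordinal.add_one_eq_succ]; exact Order.lt_succ ξ
    refine ⟨P.U1 x.1 x.2 (ξ + 1), P.U1_mem_basics hαS hψ hξ1, ?_, ?_⟩
    · exact P.mem_U1.2 (Or.inl rfl)
    · intro p hp
      rcases P.mem_U1.1 hp with hpe | ⟨hpX, hpJ⟩
      · left; rw [hpe]
      · right
        obtain ⟨h1, h2⟩ := P.Jset_bounds hαS hψ hpJ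
        exact ⟨hc.ge, (hle.trans_lt (P.a_mono x.1 hαS (ξ + 1) hξ1 ξ hξξ1)).trans_le h1, h2.le⟩
  · have hδ' : δ < x.1 := hδ.resolve_right (asymm hc)
    refine ⟨P.U3 x.1 δ, P.U3_mem_basics hx.1 hc hδ', ?_, ?_⟩
    · exact P.mem_U3.2 ⟨hx, hδ', le_rfl⟩
    · intro p hp
      obtain ⟨hpX, hp1, hp2⟩ := P.mem_U3.1 hp
      exact Or.inr ⟨hc.le, hp1, hp2⟩

lemma clopen_single {α : Ordinal} (h1 : α < P.lam.ord) (h2 : α.cof < P.mu) :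
    IsClopen (Subtype.val ⁻¹' ({(α, 0)} : Set (Ordinal × Ordinal)) : Set ↥P.Xset) := by
  constructor
  · apply P.closed_of
    intro x hxT
    have hqX : (x : Ordinal × Ordinal) ∈ P.Xset := x.2
    have hγα : (x : Ordinal × Ordinal).1 ≠ α := by
      intro h
      apply hxT
      have hcne : (x : Ordinal × Ordinal).1.cof ≠ P.mu := by rw [h]; exact h2.ne
      exact Set.mem_singleton_iff.2 (Prod.ext_iff.2 ⟨h, P.snd_of_not_S hqX hcne⟩)
    rcases lt_or_ge (x : Ordinal × Ordinal).1.cof P.mu with hcf | hcf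
    · obtain ⟨B, hB, hxB, hsub⟩ := P.nbhd (δ := 0) hqX (Or.inr hcf)
      refine ⟨B, hB, hxB, fun p hp => ?_⟩
      rcases hsub ↑p hp with h | ⟨hge, _, _⟩
      · exact fun hc => hxT (h ▸ hc)
      · exact absurd hge (not_le_of_gt hcf)
    · have hlim : Order.IsSuccLimit (x : Ordinal × Ordinal).1 :=
        Ordinal.aleph0_le_cof.1 (P.mu_reg.aleph0_le.trans hcf)
      rcases lt_or_ge (x : Ordinal × Ordinal).1 α with hlt | hge
      · obtain ⟨B, hB, hxB, hsub⟩ := P.nbhd (δ := 0) hqX (Or.inl hlim.pos)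
        refine ⟨B, hB, hxB, fun p hp => ?_⟩
        rcases hsub ↑p hp with h | ⟨_, _, hle⟩
        · exact fun hc => hxT (h ▸ hc)
        · intro hc
          rw [Set.mem_singleton_iff] at hc
          have h5 : (↑p : Ordinal × Ordinal).1 = α := by rw [hc]
          have h6 : α ≤ (x : Ordinal × Ordinal).1 := by rw [← h5]; exact hle
          exact absurd h6 (not_le_of_gt hlt)
      · have hgt : α < (x : Ordinal × Ordinal).1 := hge.lt_of_ne (Ne.symm hγα)
        obtain ⟨B, hB, hxB, hsub⟩ := P.nbhd (δ := α) hqX (Or.inl hgt)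
        refine ⟨B, hB, hxB, fun p hp => ?_⟩
        rcases hsub ↑p hp with h | ⟨_, hδlt, _⟩
        · exact fun hc => hxT (h ▸ hc)
        · intro hc
          rw [Set.mem_singleton_iff] at hc
          rw [hc] at hδlt
          exact lt_irrefl α hδlt
  · exact P.isOpen_basic (P.single_mem_basics h1 h2)

lemma clopen_U3 {α β : Ordinal} (h1 : α < P.lam.ord) (h3 : β < α) :
    IsClopen (Subtype.val ⁻¹' P.U3 α β : Set ↥P.Xset) := by
  constructor
  · apply P.closed_of
    intro x hxT
    have hqX : (x : Ordinal × Ordinal) ∈ P.Xset := x.2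
    have hnI : (x : Ordinal × Ordinal).1 ∉ Set.Ioc β α := fun h => hxT (P.mem_U3.2 ⟨hqX, h⟩)
    rcases lt_or_ge (x : Ordinal × Ordinal).1.cof P.mu with hcf | hcf
    · obtain ⟨B, hB, hxB, hsub⟩ := P.nbhd (δ := 0) hqX (Or.inr hcf)
      refine ⟨B, hB, hxB, fun p hp => ?_⟩
      rcases hsub ↑p hp with h | ⟨hge, _, _⟩
      · exact fun hc => hxT (h ▸ hc)
      · exact absurd hge (not_le_of_gt hcf)
    · have hlim : Order.IsSuccLimit (x : Ordinal × Ordinal).1 :=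
        Ordinal.aleph0_le_cof.1 (P.mu_reg.aleph0_le.trans hcf)
      rcases le_or_gt (x : Ordinal × Ordinal).1 β with hle | h4
      · obtain ⟨B, hB, hxB, hsub⟩ := P.nbhd (δ := 0) hqX (Or.inl hlim.pos)
        refine ⟨B, hB, hxB, fun p hp => ?_⟩
        rcases hsub ↑p hp with h | ⟨_, _, hle2⟩
        · exact fun hc => hxT (h ▸ hc)
        · intro hc
          obtain ⟨_, hc1, _⟩ := P.mem_U3.1 hc
          exact absurd (hle2.trans hle) (not_le_of_gt hc1)
      · have h5 : α < (x : Ordinal × Ordinal).1 := by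
          rcases le_or_gt (x : Ordinal × Ordinal).1 α with h6 | h6
          · exact absurd ⟨h4, h6⟩ hnI
          · exact h6
        obtain ⟨B, hB, hxB, hsub⟩ := P.nbhd (δ := α) hqX (Or.inl h5)
        refine ⟨B, hB, hxB, fun p hp => ?_⟩
        rcases hsub ↑p hp with h | ⟨_, h7, _⟩
        · exact fun hc => hxT (h ▸ hc)
        · intro hc
          obtain ⟨_, _, hc2⟩ := P.mem_U3.1 hc
          exact absurd h7 (not_lt_of_ge hc2)
  · apply P.open_of
    intro x hx
    have hqX : (x : Ordinal × Ordinal) ∈ P.Xset := x.2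
    obtain ⟨_, hx1, hx2⟩ := P.mem_U3.1 hx
    obtain ⟨B, hB, hxB, hsub⟩ := P.nbhd (δ := β) hqX (Or.inl hx1)
    refine ⟨B, hB, hxB, fun p hp => ?_⟩
    rcases hsub ↑p hp with h | ⟨_, h7, h8⟩
    · show (↑p : Ordinal × Ordinal) ∈ P.U3 α β
      rw [h]; exact hx
    · exact P.mem_U3.2 ⟨p.2, h7, h8.trans hx2⟩

lemma clopen_U1 (hα : α ∈ Sset P.lam.ord P.mu) (hφ : φ < P.kappa.ord) (hη : η < P.mu.ord) :
    IsClopen (Subtype.val ⁻¹' P.U1 α φ η : Set ↥P.Xset) := by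
  constructor
  · apply P.closed_of
    intro x hxT
    have hqX : (x : Ordinal × Ordinal) ∈ P.Xset := x.2
    have hJ : (x : Ordinal × Ordinal).1 ∉ P.Jset α φ η := fun h =>
      hxT (P.mem_U1.2 (Or.inr ⟨hqX, h⟩))
    by_cases hqα : (x : Ordinal × Ordinal).1 = α
    · -- same column as (α, φ), different second coordinate
      have hψκ : (x : Ordinal × Ordinal).2 < P.kappa.ord :=
        P.snd_of_S hqX (by rw [hqα]; exact hα.2)
      have hψφ : (x : Ordinal × Ordinal).2 ≠ φ := by
        intro h
        exact hxT (P.mem_U1.2 (Or.inl (Prod.ext_iff.2 ⟨hqα, h⟩)))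
      obtain ⟨η₀, hη₀μ, hη₀⟩ := bdd_of_card_lt P.mu.ord (P.M φ ∩ P.M (x : Ordinal × Ordinal).2)
        (fun ξ hξ => P.M_sub φ hφ hξ.1)
        (by rw [P.mu_reg.cof_eq]; exact P.M_ad φ hφ _ hψκ (fun h => hψφ h.symm))
      refine ⟨P.U1 α (x : Ordinal × Ordinal).2 η₀, P.U1_mem_basics hα hψκ hη₀μ, ?_, ?_⟩
      · exact P.mem_U1.2 (Or.inl (Prod.ext_iff.2 ⟨hqα, rfl⟩))
      · intro p hp hpT
        rcases P.mem_U1.1 hp with hpe | ⟨hpX, hpJ⟩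
        · rcases P.mem_U1.1 hpT with hpe2 | ⟨_, hpJ2⟩
          · rw [hpe2] at hpe
            exact hψφ (Prod.ext_iff.1 hpe).2.symm
          · rw [hpe] at hpJ2
            exact absurd (P.Jset_bounds hα hφ hpJ2).2 (lt_irrefl α)
        · rcases P.mem_U1.1 hpT with hpe2 | ⟨_, hpJ2⟩
          · rw [hpe2] at hpJ
            exact absurd (P.Jset_bounds hα hψκ hpJ).2 (lt_irrefl α)
          · obtain ⟨ξ1, hM1, hle1, hI1⟩ := P.mem_Jset.1 hpJ
            obtain ⟨ξ2, hM2, hle2, hI2⟩ := P.mem_Jset.1 hpJ2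
            by_cases hee : ξ1 = ξ2
            · subst hee
              exact absurd (hη₀ ξ1 ⟨hM2, hM1⟩) (not_lt_of_ge hle1)
            · exact P.I_disjoint hα (P.M_sub _ hψκ hM1) (P.M_sub φ hφ hM2) hee hI1 hI2
    · rcases lt_or_ge (x : Ordinal × Ordinal).1.cof P.mu with hcf | hcf
      · obtain ⟨B, hB, hxB, hsub⟩ := P.nbhd (δ := 0) hqX (Or.inr hcf)
        refine ⟨B, hB, hxB, fun p hp => ?_⟩
        rcases hsub ↑p hp with h | ⟨hge, _, _⟩
        · exact fun hc => hxT (h ▸ hc)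
        · exact absurd hge (not_le_of_gt hcf)
      · obtain ⟨δ, hδβ, hδα, hδ⟩ := P.gap hα hφ hη hJ hqα hcf
        obtain ⟨B, hB, hxB, hsub⟩ := P.nbhd (δ := δ) hqX (Or.inl hδβ)
        refine ⟨B, hB, hxB, fun p hp => ?_⟩
        rcases hsub ↑p hp with h | ⟨_, h7, h8⟩
        · exact fun hc => hxT (h ▸ hc)
        · intro hc
          rcases P.mem_U1.1 hc with hpe | ⟨_, hpJ⟩
          · have hp1 : (↑p : Ordinal × Ordinal).1 = α := by rw [hpe]
            rcases hδα with h9 | h9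
            · rw [hp1] at h7
              exact absurd (h9.trans_lt h7) (lt_irrefl α)
            · have h10 : α ≤ (x : Ordinal × Ordinal).1 := by rw [← hp1]; exact h8
              exact absurd h9 (not_lt_of_ge h10)
          · rcases hδ _ hpJ with h9 | h9
            · exact absurd h7 (not_lt_of_ge h9)
            · have h10 : (↑p : Ordinal × Ordinal).1 = (x : Ordinal × Ordinal).1 :=
                le_antisymm h8 h9
              exact hJ (h10 ▸ hpJ)
  · exact P.isOpen_basic (P.U1_mem_basics hα hφ hη)

end Setup
end DSoukupPaper


namespace DSoukupPaper

/-- The space `X[λ,μ,𝒜,C̄]` is zero-dimensional: the basic sets `U((α,φ),η)` and the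
sets `⋃{X_γ : β < γ ≤ α}` are clopen, so the space has a base of clopen sets. -/
theorem stmt8 (P : Setup) :
    (∀ α ∈ Sset P.lam.ord P.mu, ∀ φ < P.kappa.ord, ∀ η < P.mu.ord,
      IsClopen (Subtype.val ⁻¹' P.U1 α φ η : Set ↥P.Xset)) ∧
    (∀ α < P.lam.ord, ∀ β < α, IsClopen (Subtype.val ⁻¹' P.U3 α β : Set ↥P.Xset)) ∧
    (∀ V : Set ↥P.Xset, IsOpen V → ∀ x ∈ V,
      ∃ W : Set ↥P.Xset, IsClopen W ∧ x ∈ W ∧ W ⊆ V) := by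
  have part1 : ∀ α ∈ Sset P.lam.ord P.mu, ∀ φ < P.kappa.ord, ∀ η < P.mu.ord,
      IsClopen (Subtype.val ⁻¹' P.U1 α φ η : Set ↥P.Xset) :=
    fun α hα φ hφ η hη => P.clopen_U1 hα hφ hη
  have part2 : ∀ α < P.lam.ord, ∀ β < α, IsClopen (Subtype.val ⁻¹' P.U3 α β : Set ↥P.Xset) :=
    fun α hα β hβ => P.clopen_U3 hα hβ
  refine ⟨part1, part2, ?_⟩
  have hbasic : ∀ B ∈ P.basics, IsClopen (Subtype.val ⁻¹' B : Set ↥P.Xset) := by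
    rintro B (⟨α, hα, φ, hφ, η, hη, rfl⟩ | ⟨α, hα, hcf, rfl⟩ | ⟨α, hα, hcf, β, hβ, rfl⟩)
    · exact part1 α hα φ hφ η hη
    · exact P.clopen_single hα hcf
    · exact part2 α hα β hβ
  intro V hV x hxV
  have hbasis := TopologicalSpace.isTopologicalBasis_of_subbasis
    (rfl : P.instTopo = TopologicalSpace.generateFrom {W | ∃ B ∈ P.basics, W = Subtype.val ⁻¹' B})
  obtain ⟨v, ⟨f, ⟨hfin, hfsub⟩, rfl⟩, hxv, hvV⟩ := hbasis.exists_subset_of_mem_open hxV hV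
  refine ⟨⋂₀ f, ⟨isClosed_sInter ?_, hfin.isOpen_sInter ?_⟩, hxv, hvV⟩
  · intro s hs
    obtain ⟨B, hB, rfl⟩ := hfsub hs
    exact (hbasic B hB).1
  · intro s hs
    obtain ⟨B, hB, rfl⟩ := hfsub hs
    exact (hbasic B hB).2
end DSoukupPaper
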